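/- Fix γ > 0 and let (ψ_t)_{t>0} be a family of measurable kernels in the class P_γ on M. For f ∈ L¹(M,μ) define K_t f(x) = ∫_M ψ_t(x,y) f(y) dμ(y), set M_f = ∫_M f dμ, and fix a base point x₀ ∈ M. Then, as t → +∞, (i) ∫_M |K_t f(x) − M_f ψ_t(x,x₀)| dμ(x) → 0, and (ii) sup_{x ∈ M} |K_t f(x) − M_f ψ_t(x,x₀)| · V(x, t^{1/γ}) → 0. -/

import Mathlib

open MeasureTheory Metric Real Filter

/-- Convergence to the fundamental solution for kernels in the class `P_γ`:
`L¹` convergence and (weighted) sup-norm convergence as `t → ∞`. -/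
theorem stmt_0
    {M : Type*} [MetricSpace M] [ProperSpace M] [MeasurableSpace M] [BorelSpace M]
    (μ : Measure M)
    (hVpos : ∀ (x : M) (r : ℝ), 0 < r → 0 < μ (ball x r))
    (hVfin : ∀ (x : M) (r : ℝ), 0 < r → μ (ball x r) < ⊤)
    (γ : ℝ) (hγ : 0 < γ)
    (ψ : ℝ → M → M → ℝ)
    (hψmeas : ∀ t : ℝ, 0 < t → Measurable (Function.uncurry (ψ t)))
    -- (P1)
    (hP1 : ∀ t : ℝ, 0 < t → ∀ x y : M, ψ t x y = ψ t y x ∧ 0 < ψ t x y)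
    -- (P2)
    (hP2int : ∀ t : ℝ, 0 < t → ∀ x : M, ∫ y, ψ t x y ∂μ = 1)
    (hP2sup : ∃ c C : ℝ, 0 < c ∧ c ≤ C ∧ ∀ t : ℝ, 0 < t → ∀ x : M,
        c ≤ (μ (ball x (t ^ (1/γ)))).toReal * (⨆ y : M, ψ t x y) ∧
        (μ (ball x (t ^ (1/γ)))).toReal * (⨆ y : M, ψ t x y) ≤ C)
    -- (P3)
    (hP3 : ∃ C : ℝ, 1 ≤ C ∧ ∀ t : ℝ, 0 < t → ∀ x y x₀ : M, dist x₀ y ≤ t ^ (1/γ) →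
        C⁻¹ ≤ ψ t x y / ψ t x x₀ ∧ ψ t x y / ψ t x x₀ ≤ C)
    -- (P4)
    (hP4 : ∃ θ : ℝ, 0 < θ ∧ ∀ ξ : ℝ, 0 < ξ → ∃ Cξ t₀ : ℝ, 0 < Cξ ∧ 0 < t₀ ∧
        ∀ t : ℝ, t₀ < t → ∀ x x₀ y : M, dist x₀ y ≤ ξ →
          |ψ t x x₀ - ψ t x y| ≤ Cξ * t ^ (-θ) * ψ t x x₀)
    (f : M → ℝ) (hf : Integrable f μ) (x₀ : M) :
    -- (i) L¹ convergence
    Tendsto (fun t : ℝ =>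
        ∫ x, |(∫ y, ψ t x y * f y ∂μ) - (∫ y, f y ∂μ) * ψ t x x₀| ∂μ)
      atTop (nhds 0)
    ∧
    -- (ii) weighted sup-norm convergence
    (∀ ε : ℝ, 0 < ε → ∀ᶠ t in (atTop : Filter ℝ), ∀ x : M,
        |(∫ y, ψ t x y * f y ∂μ) - (∫ y, f y ∂μ) * ψ t x x₀| *
          (μ (ball x (t ^ (1/γ)))).toReal ≤ ε) := by
  classical
  obtain ⟨c, C, hc, hcC, hsup⟩ := hP2sup
  obtain ⟨θ, hθ, hP4'⟩ := hP4
  have hC : 0 < C := lt_of_lt_of_le hc hcC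
  -- σ-finiteness of μ
  haveI : SigmaFinite μ := by
    refine ⟨⟨⟨fun n => ball x₀ (n + 1), fun _ => Set.mem_univ _,
      fun n => hVfin x₀ (n + 1) (by positivity), ?_⟩⟩⟩
    ext y
    simp only [Set.mem_iUnion, Set.mem_univ, iff_true, mem_ball]
    obtain ⟨n, hn⟩ := exists_nat_gt (dist y x₀)
    exact ⟨n, by push_cast; linarith⟩
  have symm : ∀ t : ℝ, 0 < t → ∀ x y : M, ψ t x y = ψ t y x := fun t ht x y => (hP1 t ht x y).1
  have pos : ∀ t : ℝ, 0 < t → ∀ x y : M, 0 < ψ t x y := fun t ht x y => (hP1 t ht x y).2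
  have meas_y : ∀ t : ℝ, 0 < t → ∀ x : M, Measurable fun y => ψ t x y :=
    fun t ht x => (hψmeas t ht).comp measurable_prodMk_left
  have meas_x : ∀ t : ℝ, 0 < t → ∀ y : M, Measurable fun x => ψ t x y :=
    fun t ht y => (hψmeas t ht).comp (measurable_id.prodMk measurable_const)
  have int_y : ∀ t : ℝ, 0 < t → ∀ x : M, Integrable (fun y => ψ t x y) μ := by
    intro t ht x
    by_contra h
    have h1 := hP2int t ht x
    rw [integral_undef h] at h1
    norm_num at h1
  have int_x : ∀ t : ℝ, 0 < t → ∀ y : M, Integrable (fun x => ψ t x y) μ := by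
    intro t ht y
    have h : (fun x => ψ t x y) = fun x => ψ t y x := funext fun x => symm t ht x y
    rw [h]; exact int_y t ht y
  have intg_x : ∀ t : ℝ, 0 < t → ∀ y : M, ∫ x, ψ t x y ∂μ = 1 := by
    intro t ht y
    have h : (fun x => ψ t x y) = fun x => ψ t y x := funext fun x => symm t ht x y
    rw [h]; exact hP2int t ht y
  have lint_x : ∀ t : ℝ, 0 < t → ∀ y : M,
      ∫⁻ x, ENNReal.ofReal (ψ t x y) ∂μ = 1 := by
    intro t ht y
    rw [← ofReal_integral_eq_lintegral_ofReal (int_x t ht y)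
      (Filter.Eventually.of_forall fun x => (pos t ht x y).le), intg_x t ht y, ENNReal.ofReal_one]
  have hbdd : ∀ t : ℝ, 0 < t → ∀ x : M, BddAbove (Set.range fun y => ψ t x y) := by
    intro t ht x
    by_contra h
    have h0 : (⨆ y : M, ψ t x y) = 0 := Real.iSup_of_not_bddAbove h
    have h1 := (hsup t ht x).1
    rw [h0, mul_zero] at h1
    linarith
  have hψS : ∀ t : ℝ, 0 < t → ∀ x y : M, ψ t x y ≤ ⨆ z : M, ψ t x z :=
    fun t ht x y => le_ciSup (hbdd t ht x) y
  have intH : ∀ t : ℝ, 0 < t → ∀ x : M,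
      Integrable (fun y => (ψ t x y - ψ t x x₀) * f y) μ := by
    intro t ht x
    refine hf.bdd_mul ((meas_y t ht x).sub measurable_const).aestronglyMeasurable
      (c := 2 * ⨆ z : M, ψ t x z) (ae_of_all _ fun y => ?_)
    have h1 := (pos t ht x y).le
    have h2 := (pos t ht x x₀).le
    have h3 := hψS t ht x y
    have h4 := hψS t ht x x₀
    rw [Real.norm_eq_abs, abs_sub_le_iff]
    constructor <;> linarith
  have intK : ∀ t : ℝ, 0 < t → ∀ x : M, Integrable (fun y => ψ t x y * f y) μ := by
    intro t ht x
    refine hf.bdd_mul (meas_y t ht x).aestronglyMeasurable (c := ⨆ z : M, ψ t x z) (ae_of_all _ fun y => ?_)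
    rw [Real.norm_eq_abs, abs_of_pos (pos t ht x y)]
    exact hψS t ht x y
  have key : ∀ t : ℝ, 0 < t → ∀ x : M,
      (∫ y, ψ t x y * f y ∂μ) - (∫ y, f y ∂μ) * ψ t x x₀
        = ∫ y, (ψ t x y - ψ t x x₀) * f y ∂μ := by
    intro t ht x
    have h : (fun y => (ψ t x y - ψ t x x₀) * f y)
        = fun y => ψ t x y * f y - ψ t x x₀ * f y := funext fun y => by ring
    rw [h, integral_sub (intK t ht x) (hf.const_mul _), integral_const_mul]
    ring
  -- the L¹ norm of f, in real and ENNReal form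
  set Nr : ℝ := ∫ y, |f y| ∂μ with hNrdef
  have hNr0 : 0 ≤ Nr := integral_nonneg fun y => abs_nonneg _
  have hNfin : ∫⁻ y, ENNReal.ofReal |f y| ∂μ = ENNReal.ofReal Nr :=
    (ofReal_integral_eq_lintegral_ofReal hf.abs
      (Filter.Eventually.of_forall fun y => abs_nonneg _)).symm
  -- tails are eventually small
  have tailE : ∀ δ : ENNReal, 0 < δ → ∃ R : ℝ, 0 < R ∧
      ∫⁻ y in (closedBall x₀ R)ᶜ, ENNReal.ofReal |f y| ∂μ < δ := by
    intro δ hδ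
    set ν := μ.withDensity fun y => ENNReal.ofReal |f y| with hν
    have hν_apply : ∀ s : Set M, MeasurableSet s →
        ν s = ∫⁻ y in s, ENNReal.ofReal |f y| ∂μ := fun s hs => withDensity_apply _ hs
    have hνfin : ν Set.univ ≠ ⊤ := by
      rw [hν_apply _ MeasurableSet.univ, Measure.restrict_univ, hNfin]
      exact ENNReal.ofReal_ne_top
    have hmono : Monotone fun n : ℕ => closedBall x₀ (n : ℝ) := fun a b hab =>
      closedBall_subset_closedBall (by exact_mod_cast hab)
    have hunion : ⋃ n : ℕ, closedBall x₀ (n : ℝ) = Set.univ := by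
      ext y
      simp only [Set.mem_iUnion, Set.mem_univ, iff_true, mem_closedBall]
      obtain ⟨n, hn⟩ := exists_nat_gt (dist y x₀)
      exact ⟨n, hn.le⟩
    have h1 : Tendsto (fun n : ℕ => ν (closedBall x₀ (n : ℝ))) atTop (nhds (ν Set.univ)) := by
      have h := tendsto_measure_iUnion_atTop (μ := ν)
        (s := fun n : ℕ => closedBall x₀ (n : ℝ)) hmono
      rwa [hunion] at h
    have h2 : Tendsto (fun n : ℕ => ν Set.univ - ν (closedBall x₀ (n : ℝ))) atTop (nhds 0) := by
      have h := ENNReal.Tendsto.sub (tendsto_const_nhds (x := ν Set.univ)) h1 (Or.inl hνfin)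
      simpa using h
    have h3 : Tendsto (fun n : ℕ => ν (closedBall x₀ (n : ℝ))ᶜ) atTop (nhds 0) := by
      refine h2.congr fun n => ?_
      rw [measure_compl measurableSet_closedBall
        (ne_top_of_le_ne_top hνfin (measure_mono (Set.subset_univ _)))]
    have h4 := h3.eventually_lt_const hδ
    obtain ⟨n, hn⟩ := h4.exists
    refine ⟨(n : ℝ) + 1, by positivity, ?_⟩
    have hsub : (closedBall x₀ ((n : ℝ) + 1))ᶜ ⊆ (closedBall x₀ (n : ℝ))ᶜ :=
      Set.compl_subset_compl.2 (closedBall_subset_closedBall (by linarith))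
    calc ∫⁻ y in (closedBall x₀ ((n : ℝ) + 1))ᶜ, ENNReal.ofReal |f y| ∂μ
        ≤ ∫⁻ y in (closedBall x₀ (n : ℝ))ᶜ, ENNReal.ofReal |f y| ∂μ := lintegral_mono_set hsub
      _ = ν (closedBall x₀ (n : ℝ))ᶜ := (hν_apply _ measurableSet_closedBall.compl).symm
      _ < δ := hn
  -- real version of the tail
  have tailR : ∀ R : ℝ, ∫ y in (closedBall x₀ R)ᶜ, |f y| ∂μ
      = (∫⁻ y in (closedBall x₀ R)ᶜ, ENNReal.ofReal |f y| ∂μ).toReal := by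
    intro R
    rw [integral_eq_lintegral_of_nonneg_ae (Filter.Eventually.of_forall fun y => abs_nonneg _)
      (hf.abs.aestronglyMeasurable.restrict)]
  constructor
  · -- (i)
    rw [NormedAddCommGroup.tendsto_nhds_zero]
    intro ε hε
    obtain ⟨R, hR, hRtail⟩ := tailE (ENNReal.ofReal (ε / 8))
      (ENNReal.ofReal_pos.2 (by positivity))
    obtain ⟨Cξ, t₀, hCξ, ht₀, hξ⟩ := hP4' R hR
    have hθ0 : Tendsto (fun t : ℝ => Cξ * t ^ (-θ) * Nr) atTop (nhds 0) := by
      have h := ((tendsto_rpow_neg_atTop hθ).const_mul Cξ).mul_const Nr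
      simpa using h
    have hev1 : ∀ᶠ t : ℝ in atTop, Cξ * t ^ (-θ) * Nr < ε / 2 :=
      hθ0.eventually_lt_const (by linarith)
    filter_upwards [hev1, eventually_gt_atTop t₀, eventually_gt_atTop (0 : ℝ),
      eventually_ge_atTop (1 : ℝ)] with t hev ht₀' ht ht1
    rw [Real.norm_eq_abs, abs_of_nonneg (integral_nonneg fun x => abs_nonneg _)]
    have hrw : (fun x => |(∫ y, ψ t x y * f y ∂μ) - (∫ y, f y ∂μ) * ψ t x x₀|)
        = fun x => |∫ y, (ψ t x y - ψ t x x₀) * f y ∂μ| :=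
      funext fun x => by rw [key t ht x]
    rw [hrw]
    -- measurable representative of f
    set g : M → ℝ := hf.1.mk f with hgdef
    have hgm : StronglyMeasurable g := hf.1.stronglyMeasurable_mk
    have hfg : f =ᵐ[μ] g := hf.1.ae_eq_mk
    have hgf1 : (fun y => ENNReal.ofReal |g y|) =ᵐ[μ] fun y => ENNReal.ofReal |f y| :=
      hfg.mono fun y hy => by simp [hy]
    -- measurability of the inner integral
    have hjm : AEStronglyMeasurable
        (fun p : M × M => (ψ t p.1 p.2 - ψ t p.1 x₀) * f p.2) (μ.prod μ) := by
      refine AEStronglyMeasurable.mul ?_ ?_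
      · exact ((hψmeas t ht).sub
          ((hψmeas t ht).comp (measurable_fst.prodMk measurable_const))).aestronglyMeasurable
      · exact hf.1.comp_quasiMeasurePreserving Measure.quasiMeasurePreserving_snd
    have hm1 : AEStronglyMeasurable
        (fun x => ∫ y, (ψ t x y - ψ t x x₀) * f y ∂μ) μ := hjm.integral_prod_right'
    have step1 : ∫ x, |∫ y, (ψ t x y - ψ t x x₀) * f y ∂μ| ∂μ
        = (∫⁻ x, ENNReal.ofReal |∫ y, (ψ t x y - ψ t x x₀) * f y ∂μ| ∂μ).toReal := by
      rw [integral_eq_lintegral_of_nonneg_ae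
        (Filter.Eventually.of_forall fun x => abs_nonneg _) hm1.norm]
    -- pointwise bound on the inner integral
    have hptw : ∀ x : M, ENNReal.ofReal |∫ y, (ψ t x y - ψ t x x₀) * f y ∂μ|
        ≤ ∫⁻ y, ENNReal.ofReal (|ψ t x y - ψ t x x₀| * |g y|) ∂μ := by
      intro x
      have h1 : |∫ y, (ψ t x y - ψ t x x₀) * f y ∂μ|
          ≤ ∫ y, |(ψ t x y - ψ t x x₀) * f y| ∂μ := by
        have h0 := norm_integral_le_integral_norm (μ := μ) (fun y => (ψ t x y - ψ t x x₀) * f y)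
        simp only [Real.norm_eq_abs] at h0
        exact h0
      have h2 : ENNReal.ofReal (∫ y, |(ψ t x y - ψ t x x₀) * f y| ∂μ)
          = ∫⁻ y, ENNReal.ofReal (|ψ t x y - ψ t x x₀| * |f y|) ∂μ := by
        rw [ofReal_integral_eq_lintegral_ofReal (intH t ht x).abs
          (Filter.Eventually.of_forall fun y => abs_nonneg _)]
        exact lintegral_congr fun y => by rw [abs_mul]
      calc ENNReal.ofReal |∫ y, (ψ t x y - ψ t x x₀) * f y ∂μ|
          ≤ ENNReal.ofReal (∫ y, |(ψ t x y - ψ t x x₀) * f y| ∂μ) := ENNReal.ofReal_le_ofReal h1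
        _ = ∫⁻ y, ENNReal.ofReal (|ψ t x y - ψ t x x₀| * |f y|) ∂μ := h2
        _ = ∫⁻ y, ENNReal.ofReal (|ψ t x y - ψ t x x₀| * |g y|) ∂μ :=
            lintegral_congr_ae (hfg.mono fun y hy => by simp [hy])
    have step2 : (∫⁻ x, ENNReal.ofReal |∫ y, (ψ t x y - ψ t x x₀) * f y ∂μ| ∂μ)
        ≤ ∫⁻ y, ∫⁻ x, ENNReal.ofReal (|ψ t x y - ψ t x x₀| * |g y|) ∂μ ∂μ := by
      refine le_trans (lintegral_mono hptw) (le_of_eq ?_)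
      refine lintegral_lintegral_swap ?_
      refine Measurable.aemeasurable ?_
      refine Measurable.ennreal_ofReal ?_
      refine Measurable.mul ?_ ?_
      · exact ((hψmeas t ht).sub
          ((hψmeas t ht).comp (measurable_fst.prodMk measurable_const))).abs
      · exact (hgm.measurable.comp measurable_snd).abs
    have inner_eq : ∀ y : M, ∫⁻ x, ENNReal.ofReal (|ψ t x y - ψ t x x₀| * |g y|) ∂μ
        = ENNReal.ofReal |g y| * ∫⁻ x, ENNReal.ofReal |ψ t x y - ψ t x x₀| ∂μ := by
      intro y
      rw [← lintegral_const_mul' _ _ ENNReal.ofReal_ne_top]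
      exact lintegral_congr fun x => by
        rw [← ENNReal.ofReal_mul (abs_nonneg _), mul_comm]
    have hA2 : ∀ y : M, ∫⁻ x, ENNReal.ofReal |ψ t x y - ψ t x x₀| ∂μ ≤ 2 := by
      intro y
      calc ∫⁻ x, ENNReal.ofReal |ψ t x y - ψ t x x₀| ∂μ
          ≤ ∫⁻ x, (ENNReal.ofReal (ψ t x y) + ENNReal.ofReal (ψ t x x₀)) ∂μ := by
            refine lintegral_mono fun x => ?_
            rw [← ENNReal.ofReal_add (pos t ht x y).le (pos t ht x x₀).le]
            refine ENNReal.ofReal_le_ofReal ?_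
            have h1 := abs_sub (ψ t x y) (ψ t x x₀)
            rw [abs_of_pos (pos t ht x y), abs_of_pos (pos t ht x x₀)] at h1
            exact h1
        _ = 1 + 1 := by
            rw [lintegral_add_left ((meas_x t ht y).ennreal_ofReal),
              lint_x t ht y, lint_x t ht x₀]
        _ = 2 := by norm_num
    have hA1 : ∀ y ∈ closedBall x₀ R,
        ∫⁻ x, ENNReal.ofReal |ψ t x y - ψ t x x₀| ∂μ
          ≤ ENNReal.ofReal (Cξ * t ^ (-θ)) := by
      intro y hy
      have hdist : dist x₀ y ≤ R := by rw [dist_comm]; exact mem_closedBall.1 hy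
      have hb : ∀ x : M, |ψ t x y - ψ t x x₀| ≤ Cξ * t ^ (-θ) * ψ t x x₀ := by
        intro x
        rw [abs_sub_comm]
        exact hξ t ht₀' x x₀ y hdist
      have hcc : 0 ≤ Cξ * t ^ (-θ) := mul_nonneg hCξ.le (Real.rpow_nonneg ht.le _)
      calc ∫⁻ x, ENNReal.ofReal |ψ t x y - ψ t x x₀| ∂μ
          ≤ ∫⁻ x, ENNReal.ofReal (Cξ * t ^ (-θ)) * ENNReal.ofReal (ψ t x x₀) ∂μ := by
            refine lintegral_mono fun x => ?_
            rw [← ENNReal.ofReal_mul hcc]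
            exact ENNReal.ofReal_le_ofReal (hb x)
        _ = ENNReal.ofReal (Cξ * t ^ (-θ)) * ∫⁻ x, ENNReal.ofReal (ψ t x x₀) ∂μ :=
            lintegral_const_mul' _ _ ENNReal.ofReal_ne_top
        _ = ENNReal.ofReal (Cξ * t ^ (-θ)) := by rw [lint_x t ht x₀, mul_one]
    have step3 : ∫⁻ y, ∫⁻ x, ENNReal.ofReal (|ψ t x y - ψ t x x₀| * |g y|) ∂μ ∂μ
        ≤ ENNReal.ofReal (Cξ * t ^ (-θ) * Nr) + ENNReal.ofReal (ε / 4) := by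
      rw [← lintegral_add_compl
        (fun y => ∫⁻ x, ENNReal.ofReal (|ψ t x y - ψ t x x₀| * |g y|) ∂μ)
        (measurableSet_closedBall (x := x₀) (ε := R))]
      refine add_le_add ?_ ?_
      · calc ∫⁻ y in closedBall x₀ R, ∫⁻ x,
              ENNReal.ofReal (|ψ t x y - ψ t x x₀| * |g y|) ∂μ ∂μ
            ≤ ∫⁻ y in closedBall x₀ R,
              ENNReal.ofReal |g y| * ENNReal.ofReal (Cξ * t ^ (-θ)) ∂μ := by
              refine setLIntegral_mono' measurableSet_closedBall fun y hy => ?_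
              rw [inner_eq y]
              exact mul_le_mul_right (hA1 y hy) _
          _ = ENNReal.ofReal (Cξ * t ^ (-θ)) * ∫⁻ y in closedBall x₀ R,
              ENNReal.ofReal |g y| ∂μ := by
              rw [lintegral_mul_const' _ _ ENNReal.ofReal_ne_top, mul_comm]
          _ ≤ ENNReal.ofReal (Cξ * t ^ (-θ)) * ENNReal.ofReal Nr := by
              refine mul_le_mul_right ?_ _
              calc ∫⁻ y in closedBall x₀ R, ENNReal.ofReal |g y| ∂μ
                  ≤ ∫⁻ y, ENNReal.ofReal |g y| ∂μ := setLIntegral_le_lintegral _ _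
                _ = ∫⁻ y, ENNReal.ofReal |f y| ∂μ :=
                    lintegral_congr_ae hgf1
                _ = ENNReal.ofReal Nr := hNfin
          _ = ENNReal.ofReal (Cξ * t ^ (-θ) * Nr) := by
              rw [← ENNReal.ofReal_mul (mul_nonneg hCξ.le (Real.rpow_nonneg ht.le _))]
      · calc ∫⁻ y in (closedBall x₀ R)ᶜ, ∫⁻ x,
              ENNReal.ofReal (|ψ t x y - ψ t x x₀| * |g y|) ∂μ ∂μ
            ≤ ∫⁻ y in (closedBall x₀ R)ᶜ, 2 * ENNReal.ofReal |g y| ∂μ := by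
              refine setLIntegral_mono' measurableSet_closedBall.compl fun y hy => ?_
              rw [inner_eq y, mul_comm]
              exact mul_le_mul_left (hA2 y) _
          _ = 2 * ∫⁻ y in (closedBall x₀ R)ᶜ, ENNReal.ofReal |g y| ∂μ :=
              lintegral_const_mul' _ _ (by norm_num)
          _ = 2 * ∫⁻ y in (closedBall x₀ R)ᶜ, ENNReal.ofReal |f y| ∂μ := by
              rw [lintegral_congr_ae (ae_restrict_of_ae hgf1)]
          _ ≤ 2 * ENNReal.ofReal (ε / 8) := mul_le_mul_right hRtail.le _
          _ = ENNReal.ofReal (ε / 4) := by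
              rw [← ENNReal.ofReal_ofNat 2, ← ENNReal.ofReal_mul (by norm_num : (0:ℝ) ≤ 2)]
              congr 1
              ring
    have hfinal : ∫ x, |∫ y, (ψ t x y - ψ t x x₀) * f y ∂μ| ∂μ ≤ Cξ * t ^ (-θ) * Nr + ε / 4 := by
      rw [step1]
      refine ENNReal.toReal_le_of_le_ofReal ?_ ?_
      · have hcc : 0 ≤ Cξ * t ^ (-θ) * Nr :=
          mul_nonneg (mul_nonneg hCξ.le (Real.rpow_nonneg ht.le _)) hNr0
        positivity
      · rw [ENNReal.ofReal_add (mul_nonneg (mul_nonneg hCξ.le (Real.rpow_nonneg ht.le _)) hNr0)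
          (by positivity)]
        exact le_trans step2 step3
    have : Cξ * t ^ (-θ) * Nr + ε / 4 < ε := by linarith
    linarith
  · -- (ii)
    intro ε hε
    obtain ⟨R, hR, hRtail⟩ := tailE (ENNReal.ofReal (ε / (8 * C)))
      (ENNReal.ofReal_pos.2 (by positivity))
    have hτ : ∫ y in (closedBall x₀ R)ᶜ, |f y| ∂μ ≤ ε / (8 * C) := by
      rw [tailR R]
      exact ENNReal.toReal_le_of_le_ofReal (by positivity) hRtail.le
    have hτ0 : 0 ≤ ∫ y in (closedBall x₀ R)ᶜ, |f y| ∂μ :=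
      integral_nonneg fun y => abs_nonneg _
    set τ : ℝ := ∫ y in (closedBall x₀ R)ᶜ, |f y| ∂μ with hτdef
    obtain ⟨Cξ, t₀, hCξ, ht₀, hξ⟩ := hP4' R hR
    have hθ0 : Tendsto (fun t : ℝ => Cξ * t ^ (-θ) * Nr * C) atTop (nhds 0) := by
      have h := (((tendsto_rpow_neg_atTop hθ).const_mul Cξ).mul_const Nr).mul_const C
      simpa using h
    have hev1 : ∀ᶠ t : ℝ in atTop, Cξ * t ^ (-θ) * Nr * C < ε / 2 :=
      hθ0.eventually_lt_const (by linarith)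
    filter_upwards [hev1, eventually_gt_atTop t₀, eventually_gt_atTop (0 : ℝ)]
      with t hev ht₀' ht
    intro x
    set S : ℝ := ⨆ z : M, ψ t x z with hSdef
    have hS0 : 0 ≤ S := le_trans (pos t ht x x).le (hψS t ht x x)
    set V : ℝ := (μ (ball x (t ^ (1 / γ)))).toReal with hVdef
    have hV0 : 0 ≤ V := ENNReal.toReal_nonneg
    have hVS : V * S ≤ C := (hsup t ht x).2
    have hcc : 0 ≤ Cξ * t ^ (-θ) := mul_nonneg hCξ.le (Real.rpow_nonneg ht.le _)
    -- pointwise estimate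
    have hb1 : |(∫ y, ψ t x y * f y ∂μ) - (∫ y, f y ∂μ) * ψ t x x₀|
        ≤ Cξ * t ^ (-θ) * Nr * S + 2 * τ * S := by
      rw [key t ht x]
      have h1 : |∫ y, (ψ t x y - ψ t x x₀) * f y ∂μ|
          ≤ ∫ y, |(ψ t x y - ψ t x x₀) * f y| ∂μ := by
        have h0 := norm_integral_le_integral_norm (μ := μ) (fun y => (ψ t x y - ψ t x x₀) * f y)
        simp only [Real.norm_eq_abs] at h0
        exact h0
      have hsplit : ∫ y, |(ψ t x y - ψ t x x₀) * f y| ∂μ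
          = (∫ y in closedBall x₀ R, |(ψ t x y - ψ t x x₀) * f y| ∂μ)
            + ∫ y in (closedBall x₀ R)ᶜ, |(ψ t x y - ψ t x x₀) * f y| ∂μ :=
        (integral_add_compl measurableSet_closedBall (intH t ht x).abs).symm
      have hin : ∫ y in closedBall x₀ R, |(ψ t x y - ψ t x x₀) * f y| ∂μ
          ≤ Cξ * t ^ (-θ) * S * Nr := by
        have hmono : ∀ y ∈ closedBall x₀ R,
            |(ψ t x y - ψ t x x₀) * f y| ≤ (Cξ * t ^ (-θ) * S) * |f y| := by
          intro y hy
          have hdist : dist x₀ y ≤ R := by rw [dist_comm]; exact mem_closedBall.1 hy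
          rw [abs_mul]
          refine mul_le_mul_of_nonneg_right ?_ (abs_nonneg _)
          rw [abs_sub_comm]
          refine le_trans (hξ t ht₀' x x₀ y hdist) ?_
          exact mul_le_mul_of_nonneg_left (hψS t ht x x₀) hcc
        calc ∫ y in closedBall x₀ R, |(ψ t x y - ψ t x x₀) * f y| ∂μ
            ≤ ∫ y in closedBall x₀ R, (Cξ * t ^ (-θ) * S) * |f y| ∂μ :=
              setIntegral_mono_on ((intH t ht x).abs.integrableOn)
                ((hf.abs.const_mul _).integrableOn) measurableSet_closedBall hmono
          _ = (Cξ * t ^ (-θ) * S) * ∫ y in closedBall x₀ R, |f y| ∂μ := integral_const_mul _ _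
          _ ≤ (Cξ * t ^ (-θ) * S) * Nr := by
              refine mul_le_mul_of_nonneg_left ?_ (mul_nonneg hcc hS0)
              exact setIntegral_le_integral hf.abs
                (Filter.Eventually.of_forall fun y => abs_nonneg _)
          _ = Cξ * t ^ (-θ) * S * Nr := rfl
      have hout : ∫ y in (closedBall x₀ R)ᶜ, |(ψ t x y - ψ t x x₀) * f y| ∂μ
          ≤ 2 * S * τ := by
        have hmono : ∀ y ∈ (closedBall x₀ R)ᶜ,
            |(ψ t x y - ψ t x x₀) * f y| ≤ (2 * S) * |f y| := by
          intro y _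
          rw [abs_mul]
          refine mul_le_mul_of_nonneg_right ?_ (abs_nonneg _)
          have h1 := (pos t ht x y).le
          have h2 := (pos t ht x x₀).le
          have h3 := hψS t ht x y
          have h4 := hψS t ht x x₀
          rw [abs_sub_le_iff]
          constructor <;> linarith
        calc ∫ y in (closedBall x₀ R)ᶜ, |(ψ t x y - ψ t x x₀) * f y| ∂μ
            ≤ ∫ y in (closedBall x₀ R)ᶜ, (2 * S) * |f y| ∂μ :=
              setIntegral_mono_on ((intH t ht x).abs.integrableOn)
                ((hf.abs.const_mul _).integrableOn) measurableSet_closedBall.compl hmono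
          _ = (2 * S) * τ := integral_const_mul _ _
      calc |∫ y, (ψ t x y - ψ t x x₀) * f y ∂μ|
          ≤ ∫ y, |(ψ t x y - ψ t x x₀) * f y| ∂μ := h1
        _ = _ + _ := hsplit
        _ ≤ Cξ * t ^ (-θ) * S * Nr + 2 * S * τ := add_le_add hin hout
        _ = Cξ * t ^ (-θ) * Nr * S + 2 * τ * S := by ring
    -- multiply by the volume factor
    have hmul := mul_le_mul_of_nonneg_right hb1 hV0
    have hrw : (Cξ * t ^ (-θ) * Nr * S + 2 * τ * S) * V
        = (Cξ * t ^ (-θ) * Nr + 2 * τ) * (V * S) := by ring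
    rw [hrw] at hmul
    have hcoef : 0 ≤ Cξ * t ^ (-θ) * Nr + 2 * τ := by positivity
    have hfinal : (Cξ * t ^ (-θ) * Nr + 2 * τ) * (V * S)
        ≤ (Cξ * t ^ (-θ) * Nr + 2 * τ) * C := by
      refine mul_le_mul_of_nonneg_left hVS hcoef
    have hexp : (Cξ * t ^ (-θ) * Nr + 2 * τ) * C = Cξ * t ^ (-θ) * Nr * C + 2 * τ * C := by ring
    have hτC : 2 * τ * C ≤ ε / 4 := by
      have h := mul_le_mul_of_nonneg_right hτ hC.le
      calc 2 * τ * C = 2 * (τ * C) := by ring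
        _ ≤ 2 * (ε / (8 * C) * C) := by
            refine mul_le_mul_of_nonneg_left ?_ (by norm_num)
            exact mul_le_mul_of_nonneg_right hτ hC.le
        _ = ε / 4 := by field_simp; ring
    calc |(∫ y, ψ t x y * f y ∂μ) - (∫ y, f y ∂μ) * ψ t x x₀| * V
        ≤ (Cξ * t ^ (-θ) * Nr + 2 * τ) * (V * S) := hmul
      _ ≤ (Cξ * t ^ (-θ) * Nr + 2 * τ) * C := hfinal
      _ = Cξ * t ^ (-θ) * Nr * C + 2 * τ * C := hexp
      _ ≤ ε / 2 + ε / 4 := add_le_add hev.le hτC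
      _ ≤ ε := by linarith
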